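/- Let n ≥ 1 and let V be a bicompatible subgroup of S([n]^2). If the graph G_R is connected, then G_R is a complete graph on [n], i.e. every pair of distinct vertices of [n] is joined by an edge of G_R. -/

import Mathlib

/-- The permutation `u ⊗ 1` of `[n]³`, acting as `(x,y,z) ↦ (u(x,y), z)`. -/
def tensorOne {n : ℕ} (u : Equiv.Perm (Fin n × Fin n)) :
    Equiv.Perm (Fin n × Fin n × Fin n) :=
  (Equiv.prodAssoc (Fin n) (Fin n) (Fin n)).permCongr (u.prodCongr (Equiv.refl (Fin n)))

/-- The permutation `1 ⊗ u` of `[n]³`, acting as `(x,y,z) ↦ (x, u(y,z))`. -/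
def oneTensor {n : ℕ} (u : Equiv.Perm (Fin n × Fin n)) :
    Equiv.Perm (Fin n × Fin n × Fin n) :=
  (Equiv.refl (Fin n)).prodCongr u

/-- `u` is compatible with `v` if `(v ⊗ 1)(1 ⊗ u) = (1 ⊗ u)(v ⊗ 1)` in `S([n]³)`. -/
def Compatible {n : ℕ} (u v : Equiv.Perm (Fin n × Fin n)) : Prop :=
  tensorOne v * oneTensor u = oneTensor u * tensorOne v

/-- The graph `G_R` on `[n]` attached to a subgroup `V ≤ S([n]²)`: distinct
`a, b` are adjacent iff some `v ∈ V` maps some point of row `a` to a point of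
row `b`. -/
def GR {n : ℕ} (V : Subgroup (Equiv.Perm (Fin n × Fin n))) : SimpleGraph (Fin n) where
  Adj a b := a ≠ b ∧ ∃ x y : Fin n, ∃ v ∈ V, v (a, x) = (b, y)
  symm := ⟨by
    rintro a b ⟨hab, x, y, v, hv, hvab⟩
    refine ⟨hab.symm, y, x, v⁻¹, V.inv_mem hv, ?_⟩
    rw [← hvab]
    exact Equiv.symm_apply_apply v (a, x)⟩
  loopless := ⟨fun a h => h.1 rfl⟩

/-- The graph `G_C` on `[n]` attached to a subgroup `V ≤ S([n]²)`: distinct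
`a, b` are adjacent iff some `v ∈ V` maps some point of column `a` to a point
of column `b`. -/
def GC {n : ℕ} (V : Subgroup (Equiv.Perm (Fin n × Fin n))) : SimpleGraph (Fin n) where
  Adj a b := a ≠ b ∧ ∃ x y : Fin n, ∃ v ∈ V, v (x, a) = (y, b)
  symm := ⟨by
    rintro a b ⟨hab, x, y, v, hv, hvab⟩
    refine ⟨hab.symm, y, x, v⁻¹, V.inv_mem hv, ?_⟩
    rw [← hvab]
    exact Equiv.symm_apply_apply v (x, a)⟩
  loopless := ⟨fun a h => h.1 rfl⟩


theorem stmt_18 (n : ℕ) (hn : 1 ≤ n)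
    (V : Subgroup (Equiv.Perm (Fin n × Fin n)))
    (hV : ∀ u ∈ V, ∀ v ∈ V, Compatible u v)
    (hconn : (GR V).Connected) :
    ∀ a b : Fin n, a ≠ b → (GR V).Adj a b := by
  -- Key identity from compatibility
  have key : ∀ u ∈ V, ∀ v ∈ V, ∀ x y z : Fin n,
      (v (x, (u (y, z)).1)).1 = (v (x, y)).1 := by
    intro u hu v hv x y z
    have h := hV u hu v hv
    have h2 := congrArg (fun e : Equiv.Perm (Fin n × Fin n × Fin n) => (e (x, y, z)).1) h
    simpa [Compatible, tensorOne, oneTensor, Equiv.Perm.mul_apply] using h2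
  -- constancy of first coordinate in the second argument, using connectivity
  have const : ∀ v ∈ V, ∀ x y y' : Fin n, (v (x, y)).1 = (v (x, y')).1 := by
    intro v hv x y y'
    obtain ⟨w⟩ := hconn y y'
    induction w with
    | nil => rfl
    | @cons a c b h p ih =>
      obtain ⟨-, z, z', u, hu, huz⟩ := h
      have hk := key u hu v hv x a z
      rw [huz] at hk
      rw [← hk]; exact ih
  -- reachability implies row-relation
  have main : ∀ a b : Fin n, (GR V).Reachable a b →
      ∃ v ∈ V, ∃ x : Fin n, (v (a, x)).1 = b := by
    intro a b h
    obtain ⟨w⟩ := h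
    induction w with
    | nil => exact ⟨1, V.one_mem, ⟨0, hn⟩, rfl⟩
    | @cons a c b h p ih =>
      obtain ⟨vw, hvw, x', hx'⟩ := ih
      obtain ⟨-, z, z', u, hu, huz⟩ := h
      refine ⟨vw * u, V.mul_mem hvw hu, z, ?_⟩
      have hmul : (vw * u) (a, z) = vw (c, z') := by
        rw [Equiv.Perm.mul_apply, huz]
      rw [hmul, const vw hvw c z' x']
      exact hx'
  intro a b hab
  obtain ⟨v, hv, x, hx⟩ := main a b (hconn a b)
  exact ⟨hab, x, (v (a, x)).2, v, hv, by rw [← hx]⟩
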